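/- arXiv:2504.00932 — 4 statements merged into one kernel-verified Lean document; each statement's English description precedes it below -/
import Mathlib

section
/- If a graph G contains an r-shallow minor model of the complete graph K_h, then the (4r+1)-strong colouring number of G is at least h-1. -/
open SimpleGraph

/-- `u` is strongly `r`-reachable from `v` with respect to the vertex ordering induced by
the injection `ι : V → ℕ`: `ι u ≤ ι v` and there is a `v`–`u` path of length at most `r`
in which `u` is the only vertex smaller than `v`. -/
def StronglyReachable {V : Type} (G : SimpleGraph V) (ι : V → ℕ) (r : ℕ) (v u : V) : Prop :=
  ι u ≤ ι v ∧ ∃ p : G.Walk v u, p.IsPath ∧ p.length ≤ r ∧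
    ∀ w ∈ p.support, ι w < ι v → w = u

/-- `φ` is an `r`-shallow minor model of the complete graph `K_h` in `G`: each bag induces
a subgraph with a rooted spanning tree of height at most `r` (every vertex of the bag is
joined to the root by a walk of length at most `r` inside the bag), the bags are pairwise
disjoint, and between any two bags there is an edge of `G`. -/
def IsShallowKModel {V : Type} (G : SimpleGraph V) (r h : ℕ) (φ : Fin h → Set V) : Prop :=
  (∀ x : Fin h, ∃ root ∈ φ x, ∀ u ∈ φ x,
      ∃ p : G.Walk root u, p.length ≤ r ∧ ∀ w ∈ p.support, w ∈ φ x) ∧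
  (∀ x y : Fin h, x ≠ y → Disjoint (φ x) (φ y)) ∧
  (∀ x y : Fin h, x ≠ y → ∃ u ∈ φ x, ∃ w ∈ φ y, G.Adj u w)

/-- From any walk ending below the threshold `c`, we can extract a prefix-like walk to the
first vertex below `c`. -/
lemma truncate_walk {V : Type} {G : SimpleGraph V} (ι : V → ℕ) (c : ℕ) :
    ∀ {s t : V} (W : G.Walk s t), ι t < c →
    ∃ u, ι u < c ∧ ∃ p : G.Walk s u, (∀ w ∈ p.support, w ∈ W.support) ∧
      p.length ≤ W.length ∧ ∀ w ∈ p.support, ι w < c → w = u := by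
  intro s t W
  induction W with
  | nil =>
    intro ht
    exact ⟨_, ht, Walk.nil, by simp, by simp, by simp⟩
  | @cons s s' t hadj W' ih =>
    intro ht
    by_cases hs : ι s < c
    · refine ⟨s, hs, Walk.nil, by simp, by simp, by simp⟩
    · obtain ⟨u, hu, p', hsup, hlen, hsmall⟩ := ih ht
      refine ⟨u, hu, Walk.cons hadj p', ?_, by simpa using Nat.succ_le_succ hlen, ?_⟩
      · intro w hw
        rw [Walk.support_cons, List.mem_cons] at hw ⊢
        rcases hw with rfl | hw
        · exact Or.inl rfl
        · exact Or.inr (hsup w hw)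
      · intro w hw hwc
        rw [Walk.support_cons, List.mem_cons] at hw
        rcases hw with rfl | hw
        · exact absurd hwc hs
        · exact hsmall w hw hwc

/-- If a graph `G` contains an `r`-shallow minor model of `K_h`, then every vertex ordering
has `(4r+1)`-width at least `h - 1`; that is, `scol_{4r+1}(G) ≥ h - 1`. -/
theorem stmt0 {V : Type} [Fintype V] (G : SimpleGraph V) (r h : ℕ) (hh : 1 ≤ h)
    (φ : Fin h → Set V) (hφ : IsShallowKModel G r h φ)
    (ι : V → ℕ) (hι : Function.Injective ι) :
    ∃ v : V, h - 1 ≤ {u | StronglyReachable G ι (4 * r + 1) v u}.ncard := by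
  classical
  obtain ⟨hroot, hdisj, hadj⟩ := hφ
  have hne : ∀ x : Fin h, (φ x).toFinset.Nonempty := by
    intro x
    obtain ⟨ρ, hρ, -⟩ := hroot x
    exact ⟨ρ, Set.mem_toFinset.2 hρ⟩
  choose m hm hmin using fun x => Finset.exists_min_image (φ x).toFinset ι (hne x)
  have hmφ : ∀ x, m x ∈ φ x := fun x => Set.mem_toFinset.1 (hm x)
  have hminφ : ∀ x, ∀ w ∈ φ x, ι (m x) ≤ ι w := fun x w hw =>
    hmin x w (Set.mem_toFinset.2 hw)
  obtain ⟨x0, -, hx0⟩ := Finset.exists_max_image (Finset.univ : Finset (Fin h))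
    (fun x => ι (m x)) ⟨⟨0, hh⟩, Finset.mem_univ _⟩
  set v := m x0 with hv
  refine ⟨v, ?_⟩
  have key : ∀ y : Fin h, y ≠ x0 → ∃ u ∈ φ y, StronglyReachable G ι (4 * r + 1) v u := by
    intro y hy
    obtain ⟨a, ha, b, hb, hab⟩ := hadj x0 y (Ne.symm hy)
    obtain ⟨ρx, hρx, hwalkx⟩ := hroot x0
    obtain ⟨ρy, hρy, hwalky⟩ := hroot y
    obtain ⟨p1, hp1len, hp1sup⟩ := hwalkx v (hmφ x0)
    obtain ⟨p2, hp2len, hp2sup⟩ := hwalkx a ha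
    obtain ⟨p3, hp3len, hp3sup⟩ := hwalky b hb
    obtain ⟨p4, hp4len, hp4sup⟩ := hwalky (m y) (hmφ y)
    set W : G.Walk v (m y) :=
      (p1.reverse.append p2).append (Walk.cons hab (p3.reverse.append p4)) with hW
    have hWlen : W.length ≤ 4 * r + 1 := by
      rw [hW]
      simp only [Walk.length_append, Walk.length_cons, Walk.length_reverse]
      omega
    have hWsup : ∀ w ∈ W.support, w ∈ φ x0 ∨ w ∈ φ y := by
      intro w hw
      rw [hW, Walk.mem_support_append_iff, Walk.mem_support_append_iff] at hw
      rcases hw with (hw | hw) | hw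
      · rw [Walk.support_reverse, List.mem_reverse] at hw
        exact Or.inl (hp1sup w hw)
      · exact Or.inl (hp2sup w hw)
      · rw [Walk.support_cons, List.mem_cons] at hw
        rcases hw with rfl | hw
        · exact Or.inl ha
        · rw [Walk.mem_support_append_iff] at hw
          rcases hw with hw | hw
          · rw [Walk.support_reverse, List.mem_reverse] at hw
            exact Or.inr (hp3sup w hw)
          · exact Or.inr (hp4sup w hw)
    have hmy : ι (m y) < ι v := by
      have hle : ι (m y) ≤ ι v := hx0 y (Finset.mem_univ y)
      have hne' : m y ≠ v := by
        intro hEq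
        exact (hdisj y x0 hy).ne_of_mem (hmφ y) (hmφ x0) hEq
      exact lt_of_le_of_ne hle (fun hEq => hne' (hι hEq))
    obtain ⟨u, hu, p, hpsup, hplen, hpsmall⟩ := truncate_walk ι (ι v) W hmy
    have huy : u ∈ φ y := by
      have humem : u ∈ W.support := hpsup u p.end_mem_support
      rcases hWsup u humem with hux | huy
      · exfalso
        have h1 := hminφ x0 u hux
        have h2 : ι v = ι (m x0) := by rw [hv]
        omega
      · exact huy
    refine ⟨u, huy, le_of_lt hu, p.bypass, p.bypass_isPath, ?_, ?_⟩
    · exact le_trans p.length_bypass_le (le_trans hplen hWlen)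
    · intro w hw hwv
      exact hpsmall w (p.support_bypass_subset hw) hwv
  choose u huφ husr using key
  set S : Set V := {u | StronglyReachable G ι (4 * r + 1) v u} with hS
  have hSfin : S.Finite := Set.toFinite S
  have hinj : Function.Injective
      (fun y : {y : Fin h // y ≠ x0} => (⟨u y.1 y.2, husr y.1 y.2⟩ : S)) := by
    intro y1 y2 hEq
    have hveq : u y1.1 y1.2 = u y2.1 y2.2 := congrArg Subtype.val hEq
    by_contra hne'
    have hne'' : y1.1 ≠ y2.1 := fun hEq' => hne' (Subtype.ext hEq')
    exact (hdisj y1.1 y2.1 hne'').ne_of_mem (huφ y1.1 y1.2) (huφ y2.1 y2.2) hveq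
  have hcard : Nat.card {y : Fin h // y ≠ x0} ≤ Nat.card S :=
    Nat.card_le_card_of_injective _ hinj
  have hcard2 : Nat.card {y : Fin h // y ≠ x0} = h - 1 := by
    rw [Nat.card_eq_fintype_card]
    have : Fintype.card {y : Fin h // y ≠ x0} = Fintype.card (Fin h) - 1 := by
      rw [Fintype.card_subtype_compl, Fintype.card_subtype_eq]
    simp only [Fintype.card_fin] at this; exact this
  rw [← Nat.card_coe_set_eq, ← hcard2]
  exact hcard
end

section
/- Let r, t ≥ 1 and let N = {S_1 ≺ S_2 ≺ ⋯ ≺ S_{t(r+1)}} be a linearly ordered set of t(r+1) vertices of a graph G such that for every vertex x ∈ V(G)\N, the neighbourhood of x in N is an interval with respect to the ordering. Suppose G − N contains t²(r+1) pairwise vertex-disjoint paths, each of length at most r, each with one end adjacent to S_1 and the other end adjacent to S_{t(r+1)}, and such that every vertex of N is adjacent to at least one vertex of each path. Then G contains K_{t,t} as a subgraph. -/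
/-- Lemma on nested spheres (abstract form).  `S` enumerates a linearly ordered set `N` of
`t(r+1)` vertices such that every vertex outside `N` has an interval of `N` as its
neighbourhood in `N`.  If `G - N` contains `t²(r+1)` pairwise vertex-disjoint paths, each of
length at most `r`, each with one end adjacent to the minimal element `S_1` and the other
end adjacent to the maximal element `S_{t(r+1)}`, such that every vertex of `N` is adjacent
to at least one vertex of each path, then `G` contains `K_{t,t}` as a subgraph. -/
theorem stmt3 {V : Type} (G : SimpleGraph V) (r t : ℕ) (hr : 1 ≤ r) (ht : 1 ≤ t)
    (S : Fin (t * (r + 1)) → V) (hS : Function.Injective S)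
    (hInterval : ∀ x : V, (∀ i, x ≠ S i) → ∀ i j k : Fin (t * (r + 1)),
      i ≤ j → j ≤ k → G.Adj x (S i) → G.Adj x (S k) → G.Adj x (S j))
    (u w : Fin (t ^ 2 * (r + 1)) → V)
    (P : ∀ p, G.Walk (u p) (w p))
    (hpath : ∀ p, (P p).IsPath)
    (hlen : ∀ p, (P p).length ≤ r)
    (havoid : ∀ p, ∀ z ∈ (P p).support, ∀ i, z ≠ S i)
    (hdisj : ∀ p q, p ≠ q → ∀ z ∈ (P p).support, z ∉ (P q).support)
    (hfirst : ∀ p, G.Adj (u p) (S ⟨0, Nat.mul_pos ht (Nat.succ_pos r)⟩))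
    (hlast : ∀ p, G.Adj (w p) (S ⟨t * (r + 1) - 1,
      Nat.sub_lt (Nat.mul_pos ht (Nat.succ_pos r)) Nat.one_pos⟩))
    (hall : ∀ i, ∀ p, ∃ z ∈ (P p).support, G.Adj (S i) z) :
    ∃ A B : Finset V, A.card = t ∧ B.card = t ∧ Disjoint A B ∧
      ∀ a ∈ A, ∀ b ∈ B, G.Adj a b := by
  classical
  have hnpos : 0 < t * (r + 1) := Nat.mul_pos ht (Nat.succ_pos r)
  -- Step 1: each path has a vertex adjacent to an interval of length t of N.
  have key : ∀ p, ∃ z ∈ (P p).support, ∃ s : ℕ, s + t ≤ t * (r + 1) ∧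
      ∀ j, j < t → ∀ (h : s + j < t * (r + 1)), G.Adj z (S ⟨s + j, h⟩) := by
    intro p
    choose f hf hadj using fun i => hall i p
    have hmaps : ∀ i : Fin (t * (r + 1)), i ∈ Finset.univ → f i ∈ (P p).support.toFinset := by
      intro i _; simpa using hf i
    have hcard : (P p).support.toFinset.card * t ≤ (Finset.univ : Finset (Fin (t * (r+1)))).card := by
      have h1 : (P p).support.toFinset.card ≤ r + 1 := by
        calc (P p).support.toFinset.card ≤ (P p).support.length := (P p).support.toFinset_card_le
          _ = (P p).length + 1 := (P p).length_support
          _ ≤ r + 1 := by have := hlen p; omega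
      have : (P p).support.toFinset.card * t ≤ (r + 1) * t :=
        Nat.mul_le_mul_right _ h1
      simpa [Finset.card_univ, Nat.mul_comm] using this
    have hne : ((P p).support.toFinset).Nonempty := by
      exact ⟨f ⟨0, hnpos⟩, by simpa using hf ⟨0, hnpos⟩⟩
    obtain ⟨z, hz, hzcard⟩ :=
      Finset.exists_le_card_fiber_of_mul_le_card_of_maps_to hmaps hne hcard
    have hzsupp : z ∈ (P p).support := by simpa using hz
    set F : Finset (Fin (t * (r + 1))) := Finset.univ.filter (fun i => f i = z) with hF
    have hFne : F.Nonempty := Finset.card_pos.1 (lt_of_lt_of_le ht hzcard)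
    set m := F.min' hFne
    set M := F.max' hFne
    have hadjz : ∀ i ∈ F, G.Adj z (S i) := by
      intro i hi
      have : f i = z := (Finset.mem_filter.1 hi).2
      exact (this ▸ hadj i).symm
    have hmid : ∀ j : Fin (t * (r + 1)), m ≤ j → j ≤ M → G.Adj z (S j) := by
      intro j h1 h2
      exact hInterval z (havoid p z hzsupp) m j M h1 h2
        (hadjz m (F.min'_mem hFne)) (hadjz M (F.max'_mem hFne))
    have hsub : F ⊆ Finset.Icc m M := by
      intro i hi
      exact Finset.mem_Icc.2 ⟨F.min'_le i hi, F.le_max' i hi⟩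
    have hcardI : t ≤ (M : ℕ) + 1 - (m : ℕ) := by
      calc t ≤ F.card := hzcard
        _ ≤ (Finset.Icc m M).card := Finset.card_le_card hsub
        _ = (M : ℕ) + 1 - (m : ℕ) := Fin.card_Icc m M
    have hmain : ∀ j, j < t → ∀ h : (m : ℕ) + j < t * (r + 1),
        G.Adj z (S ⟨(m : ℕ) + j, h⟩) := by
      intro j hj h
      refine hmid ⟨(m : ℕ) + j, h⟩ ?_ ?_ <;> rw [Fin.le_def]
      · exact Nat.le_add_right _ j
      · show (m : ℕ) + j ≤ (M : ℕ); omega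
    exact ⟨z, hzsupp, (m : ℕ), by have := M.isLt; omega, hmain⟩
  choose x hxsupp s hs hadjx using key
  have hslt : ∀ p, s p < t * (r + 1) := fun p => by have := hs p; omega
  -- Step 2: pigeonhole on starting indices
  have hcard2 : (Finset.univ : Finset (Fin (t * (r + 1)))).card * t ≤
      (Finset.univ : Finset (Fin (t ^ 2 * (r + 1)))).card := by
    simp only [Finset.card_univ, Fintype.card_fin]
    exact le_of_eq (by ring)
  obtain ⟨s₀, -, hfib⟩ :=
    Finset.exists_le_card_fiber_of_mul_le_card_of_maps_to
      (f := fun p => (⟨s p, hslt p⟩ : Fin (t * (r + 1))))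
      (fun p _ => Finset.mem_univ _) ⟨⟨0, hnpos⟩, Finset.mem_univ _⟩ hcard2
  set Q : Finset (Fin (t ^ 2 * (r + 1))) :=
    Finset.univ.filter (fun p => (⟨s p, hslt p⟩ : Fin (t * (r + 1))) = s₀) with hQ
  obtain ⟨Q', hQ'sub, hQ'card⟩ := Finset.exists_subset_card_eq hfib
  have hsQ : ∀ p ∈ Q', s p = (s₀ : ℕ) := by
    intro p hp
    have := (Finset.mem_filter.1 (hQ'sub hp)).2
    exact congrArg Fin.val this
  obtain ⟨p₀, hp₀⟩ := Finset.card_pos.1 (by omega : 0 < Q'.card)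
  have hs₀t : (s₀ : ℕ) + t ≤ t * (r + 1) := by
    have := hs p₀; rw [hsQ p₀ hp₀] at this; exact this
  refine ⟨Q'.image x,
    Finset.image (fun j : Fin t => S ⟨(s₀ : ℕ) + j, by have := j.isLt; omega⟩) Finset.univ,
    ?_, ?_, ?_, ?_⟩
  · rw [Finset.card_image_of_injOn, hQ'card]
    intro p hp q hq hpq
    by_contra hne
    exact hdisj p q hne (x p) (hxsupp p) (hpq ▸ hxsupp q)
  · rw [Finset.card_image_of_injective _ ?_, Finset.card_univ, Fintype.card_fin]
    intro a b hab
    have := hS hab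
    have : (s₀ : ℕ) + a = (s₀ : ℕ) + b := congrArg Fin.val this
    exact Fin.ext (by omega)
  · rw [Finset.disjoint_left]
    intro a ha hb
    obtain ⟨p, hp, rfl⟩ := Finset.mem_image.1 ha
    obtain ⟨j, -, hj⟩ := Finset.mem_image.1 hb
    exact havoid p (x p) (hxsupp p) _ hj.symm
  · intro a ha b hb
    obtain ⟨p, hp, rfl⟩ := Finset.mem_image.1 ha
    obtain ⟨j, -, rfl⟩ := Finset.mem_image.1 hb
    have h := hadjx p j j.isLt (by rw [hsQ p hp]; have := j.isLt; omega)
    have hsp := hsQ p hp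
    convert h using 2
    exact Fin.ext (by simp [hsp])
end

section
/- Let n ≥ 2 and let G be a finite triangle-free graph of minimum degree at least n such that G − N[y] is connected for every vertex y, where N[y] is the closed neighbourhood of y. Suppose G is the intersection graph of a family {S_v : v ∈ V(G)} of spheres (boundaries of balls) in ℝ^d. Fix v with S_v of minimum radius. Then among the spheres representing neighbours of v, there do not exist three spheres S_x, S_y, S_z with S_y contained in the interior of S_x and S_z contained in the interior of S_y. -/
open Metric Set

set_option maxHeartbeats 1000000 in
/-- Let `n ≥ 2` and let `G` be a finite triangle-free graph of minimum degree at least `n`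
such that `G − N[y]` is connected for every vertex `y`.  Suppose `G` is the intersection
graph of a family of spheres in `ℝ^d`, and let `v` have a sphere of minimum radius.  Then
among the spheres of neighbours of `v`, there is no nested triple `S_x, S_y, S_z` with
`S_y` contained in the interior of `S_x` and `S_z` contained in the interior of `S_y`. -/
theorem stmt10 {d : ℕ} {ι : Type} [Fintype ι] [Nonempty ι] (n : ℕ) (hn : 2 ≤ n)
    (G : SimpleGraph ι) [DecidableRel G.Adj]
    (c : ι → EuclideanSpace ℝ (Fin d)) (ρ : ι → ℝ) (hρ : ∀ i, 0 < ρ i)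
    (hrep : ∀ i j, G.Adj i j ↔ i ≠ j ∧
      (Metric.sphere (c i) (ρ i) ∩ Metric.sphere (c j) (ρ j)).Nonempty)
    (htri : G.CliqueFree 3)
    (hdeg : ∀ y, n ≤ G.degree y)
    (hconn : ∀ y : ι, (G.induce {z : ι | z ≠ y ∧ ¬ G.Adj y z}).Connected)
    (v : ι) (hmin : ∀ i, ρ v ≤ ρ i) :
    ¬ ∃ x y z : ι, G.Adj v x ∧ G.Adj v y ∧ G.Adj v z ∧
      Metric.closedBall (c y) (ρ y) ⊆ Metric.ball (c x) (ρ x) ∧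
      Metric.closedBall (c z) (ρ z) ⊆ Metric.ball (c y) (ρ y) := by
  classical
  rintro ⟨x, y, z, hvx, hvy, hvz, hyx, hzy⟩
  obtain ⟨-, r, hrv, hry⟩ := (hrep v y).1 hvy
  obtain ⟨-, p, hpv, hpz⟩ := (hrep v z).1 hvz
  obtain ⟨-, q, hqv, hqx⟩ := (hrep v x).1 hvx
  -- every point of the sphere of `x` is strictly outside the closed ball of `y`
  have hxout : ∀ w, w ∈ Metric.sphere (c x) (ρ x) → ρ y < dist w (c y) := by
    intro w hw
    by_contra hle
    push_neg at hle
    have : w ∈ Metric.ball (c x) (ρ x) := hyx (Metric.mem_closedBall.2 hle)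
    rw [Metric.mem_ball] at this
    rw [Metric.mem_sphere] at hw
    linarith
  have hplt : dist p (c y) < ρ y := by
    have : p ∈ Metric.ball (c y) (ρ y) :=
      hzy (Metric.sphere_subset_closedBall hpz)
    rwa [Metric.mem_ball] at this
  have hqgt : ρ y < dist q (c y) := hxout q hqx
  have hreq : dist r (c y) = ρ y := Metric.mem_sphere.1 hry
  -- the vertices x and z lie in the complement of N[y]
  have hxy : x ≠ y := by
    intro h
    have := hxout r (by rw [h]; exact hry)
    linarith
  have hzyne : z ≠ y := by
    intro h
    have : r ∈ Metric.ball (c y) (ρ y) :=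
      hzy (by rw [h]; exact Metric.sphere_subset_closedBall hry)
    rw [Metric.mem_ball] at this
    linarith
  have hnadj_yx : ¬ G.Adj y x := fun h =>
    htri {v, y, x} (SimpleGraph.is3Clique_triple_iff.2 ⟨hvy, hvx, h⟩)
  have hnadj_yz : ¬ G.Adj y z := fun h =>
    htri {v, y, z} (SimpleGraph.is3Clique_triple_iff.2 ⟨hvy, hvz, h⟩)
  rcases Nat.lt_or_ge d 2 with hd | hd
  · -- low dimension: the sphere of `v` has at most two points, but p, q, r are
    -- three distinct points of it
    have hpq : p ≠ q := fun h => by rw [h] at hplt; linarith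
    have hpr : p ≠ r := fun h => by rw [h] at hplt; linarith
    have hqr : q ≠ r := fun h => by rw [h] at hqgt; linarith
    interval_cases d
    · exact hpq (PiLp.ext fun i => Fin.elim0 i)
    · have hdist : ∀ a b : EuclideanSpace ℝ (Fin 1), dist a b = |a 0 - b 0| := by
        intro a b
        rw [EuclideanSpace.dist_eq, Fin.sum_univ_one, Real.sqrt_sq dist_nonneg,
          Real.dist_eq]
      have ext1 : ∀ a b : EuclideanSpace ℝ (Fin 1), a 0 = b 0 → a = b := by
        intro a b h
        refine PiLp.ext fun i => ?_
        have : i = 0 := Subsingleton.elim _ _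
        rw [this]; exact h
      have habs : ∀ a : EuclideanSpace ℝ (Fin 1), a ∈ Metric.sphere (c v) (ρ v) →
          a 0 - c v 0 = ρ v ∨ a 0 - c v 0 = -ρ v := by
        intro a ha
        rw [Metric.mem_sphere, hdist] at ha
        exact (abs_eq (hρ v).le).1 ha
      rcases habs p hpv with hp | hp <;> rcases habs q hqv with hq | hq <;>
        rcases habs r hrv with hr | hr <;>
        first
          | exact hpq (ext1 _ _ (by linarith))
          | exact hpr (ext1 _ _ (by linarith))
          | exact hqr (ext1 _ _ (by linarith))
  · -- dimension at least 2: spheres are connected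
    have hrank : 1 < Module.rank ℝ (EuclideanSpace ℝ (Fin d)) := by
      have hf : Module.finrank ℝ (EuclideanSpace ℝ (Fin d)) = d :=
        finrank_euclideanSpace_fin
      rw [← Module.finrank_eq_rank, hf]
      exact_mod_cast hd
    set s : Set ι := {w : ι | w ≠ y ∧ ¬ G.Adj y w} with hs
    set Ext : Set (EuclideanSpace ℝ (Fin d)) := {w | ρ y < dist w (c y)} with hExt
    have hExtOpen : IsOpen Ext := by
      have : Ext = (Metric.closedBall (c y) (ρ y))ᶜ := by
        ext w
        simp [hExt, Metric.mem_closedBall, not_le]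
      rw [this]
      exact Metric.isClosed_closedBall.isOpen_compl
    have hdisj : Disjoint Ext (Metric.ball (c y) (ρ y)) := by
      rw [Set.disjoint_left]
      intro w hw hw'
      rw [Metric.mem_ball] at hw'
      exact absurd hw' (by simp only [hExt, Set.mem_setOf_eq] at hw; linarith)
    -- spheres of vertices in s avoid the sphere of y
    have hcover : ∀ w : ι, w ∈ s →
        Metric.sphere (c w) (ρ w) ⊆ Ext ∪ Metric.ball (c y) (ρ y) := by
      intro w hw a ha
      have hne : dist a (c y) ≠ ρ y := by
        intro h
        exact hw.2 (((hrep w y).2 ⟨hw.1, ⟨a, ha, Metric.mem_sphere.2 h⟩⟩).symm)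
      rcases lt_or_gt_of_ne hne with h | h
      · exact Or.inr (Metric.mem_ball.2 h)
      · exact Or.inl h
    have step : ∀ w : ι, w ∈ s → (Metric.sphere (c w) (ρ w) ∩ Ext).Nonempty →
        Metric.sphere (c w) (ρ w) ⊆ Ext := by
      intro w hw hne
      exact (isConnected_sphere hrank (c w) (hρ w).le).isPreconnected.subset_left_of_subset_union
        hExtOpen Metric.isOpen_ball hdisj (hcover w hw) hne
    have hx_s : x ∈ s := ⟨hxy, hnadj_yx⟩
    have hz_s : z ∈ s := ⟨hzyne, hnadj_yz⟩
    have key : ∀ (a b : ↑s) (_ : (G.induce s).Walk a b),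
        Metric.sphere (c ↑a) (ρ ↑a) ⊆ Ext → Metric.sphere (c ↑b) (ρ ↑b) ⊆ Ext := by
      intro a b w
      induction w with
      | nil => exact id
      | @cons a' m b' h w ih =>
        intro ha
        apply ih
        have hadj : G.Adj ↑a' ↑m := h
        obtain ⟨pt, hpt1, hpt2⟩ := ((hrep (↑a' : ι) ↑m).1 hadj).2
        exact step ↑m m.2 ⟨pt, hpt2, ha hpt1⟩
    obtain ⟨w⟩ := (hconn y).preconnected ⟨x, hx_s⟩ ⟨z, hz_s⟩
    have hxsub : Metric.sphere (c x) (ρ x) ⊆ Ext := fun a ha => hxout a ha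
    have hzout : Metric.sphere (c z) (ρ z) ⊆ Ext := key ⟨x, hx_s⟩ ⟨z, hz_s⟩ w hxsub
    have := hzout hpz
    simp only [hExt, Set.mem_setOf_eq] at this
    linarith
end

section
/- For every d ≥ 2 there exists n such that no graph G of minimum degree at least n that is triangle-free and remains connected after deleting any closed neighbourhood N[y] is the intersection graph of spheres in ℝ^d. (Equivalently: for every d there is a finite graph that is not a d-sphere graph.) -/
set_option maxHeartbeats 1000000

open Metric Set Module

section Aux

variable {E : Type*} [NormedAddCommGroup E] [InnerProductSpace ℝ E] [FiniteDimensional ℝ E]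

private lemma exists_unit_orthogonal' (hdim : 2 ≤ finrank ℝ E) (u : E) :
    ∃ w : E, ‖w‖ = 1 ∧ inner ℝ u w = (0 : ℝ) := by
  have hK : finrank ℝ (ℝ ∙ u) ≤ 1 := by
    rcases eq_or_ne u 0 with rfl | hu
    · rw [Submodule.span_zero_singleton]; simp
    · exact le_of_eq (finrank_span_singleton hu)
  have hsum : finrank ℝ (ℝ ∙ u) + finrank ℝ (ℝ ∙ u)ᗮ = finrank ℝ E :=
    Submodule.finrank_add_finrank_orthogonal _
  have hpos : (ℝ ∙ u)ᗮ ≠ ⊥ := by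
    intro h
    rw [h] at hsum
    simp only [finrank_bot, add_zero] at hsum
    omega
  obtain ⟨w', hw'mem, hw'0⟩ := Submodule.exists_mem_ne_zero_of_ne_bot hpos
  refine ⟨‖w'‖⁻¹ • w', ?_, ?_⟩
  · rw [norm_smul, norm_inv, norm_norm, inv_mul_cancel₀ (norm_ne_zero_iff.mpr hw'0)]
  · rw [real_inner_smul_right,
      (Submodule.mem_orthogonal _ w').mp hw'mem u (Submodule.mem_span_singleton_self u), mul_zero]

private lemma sphere_inter_sphere_nonempty' (hdim : 2 ≤ finrank ℝ E)
    {c₁ c₂ : E} {r₁ r₂ : ℝ} (h₁ : 0 < r₁) (h₂ : 0 < r₂)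
    (hlo : |r₁ - r₂| ≤ dist c₁ c₂) (hhi : dist c₁ c₂ ≤ r₁ + r₂) :
    (sphere c₁ r₁ ∩ sphere c₂ r₂).Nonempty := by
  have hnt : Nontrivial E := by
    have : 0 < finrank ℝ E := by omega
    exact Module.nontrivial_of_finrank_pos this
  set D := dist c₁ c₂ with hD
  rcases eq_or_ne c₁ c₂ with rfl | hne
  · have hD0 : D = 0 := dist_self _
    have hr : r₁ = r₂ := by
      rw [hD0] at hlo
      have h' : |r₁ - r₂| = 0 := le_antisymm hlo (abs_nonneg _)
      linarith [abs_eq_zero.mp h']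
    obtain ⟨x, hx⟩ := exists_norm_eq E h₁.le
    exact ⟨c₁ + x, by simp [hx], by simp [hx, hr]⟩
  · have hD0 : 0 < D := dist_pos.mpr hne
    set u : E := D⁻¹ • (c₂ - c₁) with hu
    have hunorm : ‖u‖ = 1 := by
      rw [hu, norm_smul, norm_inv, Real.norm_of_nonneg hD0.le, ← dist_eq_norm' c₁ c₂, ← hD,
        inv_mul_cancel₀ hD0.ne']
    obtain ⟨w, hwnorm, hworth⟩ := exists_unit_orthogonal' hdim u
    set a : ℝ := (D ^ 2 + r₁ ^ 2 - r₂ ^ 2) / (2 * D) with ha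
    have hb2 : 0 ≤ r₁ ^ 2 - a ^ 2 := by
      have h1 : a ≤ r₁ := by
        rw [ha, div_le_iff₀ (by positivity)]
        have := abs_le.mp hlo
        nlinarith [this.1, this.2]
      have h2 : -r₁ ≤ a := by
        rw [ha, le_div_iff₀ (by positivity)]
        have := abs_le.mp hlo
        nlinarith [this.1, this.2]
      nlinarith
    set b : ℝ := Real.sqrt (r₁ ^ 2 - a ^ 2) with hb
    have hbsq : b ^ 2 = r₁ ^ 2 - a ^ 2 := Real.sq_sqrt hb2
    refine ⟨c₁ + (a • u + b • w), ?_, ?_⟩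
    · have hin : inner ℝ (a • u) (b • w) = (0 : ℝ) := by
        rw [real_inner_smul_left, real_inner_smul_right, hworth]; ring
      have hnu : ‖a • u‖ = |a| := by rw [norm_smul, hunorm, Real.norm_eq_abs, mul_one]
      have hnw : ‖b • w‖ = |b| := by rw [norm_smul, hwnorm, Real.norm_eq_abs, mul_one]
      have hsq : ‖a • u + b • w‖ ^ 2 = r₁ ^ 2 := by
        rw [norm_add_sq_real, hin, hnu, hnw, sq_abs, sq_abs]
        linarith
      have hn : ‖a • u + b • w‖ = r₁ := by
        nlinarith [norm_nonneg (a • u + b • w)]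
      simp [mem_sphere_iff_norm, hn]
    · have hc₂ : c₂ = c₁ + D • u := by
        rw [hu, smul_smul, mul_inv_cancel₀ hD0.ne', one_smul]
        abel
      have key : c₁ + (a • u + b • w) - c₂ = (a - D) • u + b • w := by
        rw [hc₂, sub_smul]; abel
      have hin : inner ℝ ((a - D) • u) (b • w) = (0 : ℝ) := by
        rw [real_inner_smul_left, real_inner_smul_right, hworth]; ring
      have hnu : ‖(a - D) • u‖ = |a - D| := by rw [norm_smul, hunorm, Real.norm_eq_abs, mul_one]
      have hnw : ‖b • w‖ = |b| := by rw [norm_smul, hwnorm, Real.norm_eq_abs, mul_one]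
      have hsq : ‖(a - D) • u + b • w‖ ^ 2 = r₂ ^ 2 := by
        rw [norm_add_sq_real, hin, hnu, hnw, sq_abs, sq_abs]
        have h2aD : 2 * D * a = D ^ 2 + r₁ ^ 2 - r₂ ^ 2 := by
          rw [ha]; field_simp
        nlinarith
      have hn : ‖(a - D) • u + b • w‖ = r₂ := by
        nlinarith [norm_nonneg ((a - D) • u + b • w)]
      rw [mem_sphere_iff_norm, key, hn]

omit [InnerProductSpace ℝ E] [FiniteDimensional ℝ E] in
private lemma sphere_side' {c : E} {R : ℝ} {S : Set E} (hS : IsPreconnected S)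
    (hdisj : S ∩ sphere c R = ∅) :
    S ⊆ ball c R ∨ S ⊆ {x | R < dist x c} := by
  apply hS.subset_or_subset isOpen_ball
  · have h : {x : E | R < dist x c} = (fun x => dist x c) ⁻¹' Ioi R := rfl
    rw [h]
    exact isOpen_Ioi.preimage (by fun_prop)
  · rw [Set.disjoint_left]
    intro x hx hx'
    exact absurd (mem_ball.mp hx) (not_lt.mpr (le_of_lt hx'))
  · intro x hx
    have h : dist x c ≠ R := fun h => eq_empty_iff_forall_notMem.mp hdisj x ⟨hx, h⟩
    rcases lt_or_gt_of_ne h with h | h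
    · exact Or.inl (mem_ball.mpr h)
    · exact Or.inr h

omit [FiniteDimensional ℝ E] in
/-- If a sphere of nonnegative radius is contained in an open ball, the ball of the sphere is
strictly inside the open ball. -/
private lemma sphere_subset_ball_nested' [Nontrivial E] {x y : E} {rx ry : ℝ} (hrx : 0 ≤ rx)
    (h : sphere x rx ⊆ ball y ry) : dist x y + rx < ry := by
  rcases eq_or_ne x y with rfl | hne
  · obtain ⟨e, he⟩ := exists_norm_eq E hrx
    have hp : x + e ∈ sphere x rx := by simp [he]
    have := mem_ball.mp (h hp)
    rw [dist_self]
    calc 0 + rx = dist (x + e) x := by simp [he]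
    _ < ry := this
  · have hD0 : 0 < dist x y := dist_pos.mpr hne
    set D := dist x y with hD
    set p := x + (rx / D) • (x - y) with hp
    have hpx : p ∈ sphere x rx := by
      rw [mem_sphere, hp, dist_self_add_left, norm_smul, Real.norm_eq_abs,
        abs_of_nonneg (by positivity), ← dist_eq_norm, ← hD]
      field_simp
    have hpy : dist p y = D + rx := by
      have hkey : p - y = (1 + rx / D) • (x - y) := by
        rw [hp, add_smul, one_smul]; abel
      rw [dist_eq_norm, hkey, norm_smul, Real.norm_eq_abs, abs_of_nonneg (by positivity),
        ← dist_eq_norm, ← hD]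
      field_simp
    have := mem_ball.mp (h hpx)
    rw [hpy] at this
    linarith

omit [InnerProductSpace ℝ E] [FiniteDimensional ℝ E] in
private lemma graph_walk_invariant' {α : Type*} {H : SimpleGraph α} {P : α → Prop}
    (hP : ∀ a b, H.Adj a b → P a → P b) {a b : α} (h : H.Reachable a b) (ha : P a) : P b := by
  obtain ⟨w⟩ := h
  induction w with
  | nil => exact ha
  | cons h' p ih => exact ih (hP _ _ h' ha)

end Aux

/-- For every `d ≥ 2` there exists `n` such that no finite (nonempty) triangle-free graph
of minimum degree at least `n` that remains connected after deleting any closed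
neighbourhood `N[y]` is the intersection graph of spheres in `ℝ^d`.  Equivalently, for
every `d` there is a finite graph that is not a `d`-sphere graph. -/
theorem stmt11 (d : ℕ) (hd : 2 ≤ d) :
    ∃ n : ℕ, ∀ (ι : Type) [Fintype ι] [Nonempty ι]
      (G : SimpleGraph ι) [DecidableRel G.Adj],
      (∀ y, n ≤ G.degree y) →
      G.CliqueFree 3 →
      (∀ y : ι, (G.induce {z : ι | z ≠ y ∧ ¬ G.Adj y z}).Connected) →
      ¬ ∃ (c : ι → EuclideanSpace ℝ (Fin d)) (ρ : ι → ℝ),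
        (∀ i, 0 < ρ i) ∧
        ∀ i j, G.Adj i j ↔ i ≠ j ∧
          (Metric.sphere (c i) (ρ i) ∩ Metric.sphere (c j) (ρ j)).Nonempty := by
  refine ⟨3 ^ d + 2, ?_⟩
  intro ι _ _ G _ hdeg htf hconn
  rintro ⟨c, ρ, hρ, hadj⟩
  classical
  have hfr : finrank ℝ (EuclideanSpace ℝ (Fin d)) = d := finrank_euclideanSpace_fin
  have hdim : 2 ≤ finrank ℝ (EuclideanSpace ℝ (Fin d)) := by rw [hfr]; exact hd
  have hnt : Nontrivial (EuclideanSpace ℝ (Fin d)) :=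
    Module.nontrivial_of_finrank_pos (R := ℝ) (by omega)
  have hrank : 1 < Module.rank ℝ (EuclideanSpace ℝ (Fin d)) := by
    rw [← finrank_eq_rank]
    exact_mod_cast hdim
  -- spheres of distinct non-adjacent vertices are disjoint
  have hdisj : ∀ {x y : ι}, x ≠ y → ¬ G.Adj x y →
      (sphere (c x) (ρ x) ∩ sphere (c y) (ρ y)) = ∅ := by
    intro x y hxy hax
    rw [← Set.not_nonempty_iff_eq_empty]
    exact fun hne => hax ((hadj x y).mpr ⟨hxy, hne⟩)
  -- trichotomy for distinct non-adjacent vertices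
  have htri : ∀ {x y : ι}, x ≠ y → ¬ G.Adj x y →
      ρ x + ρ y < dist (c x) (c y) ∨ dist (c x) (c y) < ρ x - ρ y ∨
        dist (c x) (c y) < ρ y - ρ x := by
    intro x y hxy hax
    by_contra hcon
    push_neg at hcon
    obtain ⟨h1, h2, h3⟩ := hcon
    have habs : |ρ x - ρ y| ≤ dist (c x) (c y) := abs_le.mpr ⟨by linarith, h2⟩
    obtain ⟨p, hp⟩ := sphere_inter_sphere_nonempty' hdim (hρ x) (hρ y) habs h1
    exact (eq_empty_iff_forall_notMem.mp (hdisj hxy hax)) p hp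
  -- side dichotomy
  have hside : ∀ {x y : ι}, x ≠ y → ¬ G.Adj y x →
      sphere (c x) (ρ x) ⊆ ball (c y) (ρ y) ∨
        sphere (c x) (ρ x) ⊆ {p | ρ y < dist p (c y)} := by
    intro x y hxy hax
    exact sphere_side' (isPreconnected_sphere hrank _ _)
      (hdisj hxy (fun h => hax h.symm))
  -- key nesting lemma via connectivity of G - N[y]
  have hNL : ∀ y z x : ι, z ≠ y → ¬ G.Adj y z → dist (c z) (c y) < ρ y - ρ z →
      x ≠ y → ¬ G.Adj y x → dist (c x) (c y) < ρ y - ρ x := by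
    intro y z x hzy hayz hn hxy hayx
    have hPz : sphere (c z) (ρ z) ⊆ ball (c y) (ρ y) := by
      intro p hp
      rw [mem_sphere] at hp
      rw [mem_ball]
      calc dist p (c y) ≤ dist p (c z) + dist (c z) (c y) := dist_triangle _ _ _
      _ < ρ y := by rw [hp]; linarith
    set V : Set ι := {z' : ι | z' ≠ y ∧ ¬ G.Adj y z'} with hV
    have step : ∀ a b : V, (G.induce V).Adj a b →
        sphere (c a.1) (ρ a.1) ⊆ ball (c y) (ρ y) →
        sphere (c b.1) (ρ b.1) ⊆ ball (c y) (ρ y) := by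
      intro a b hab hPa
      have hGab : G.Adj a.1 b.1 := hab
      obtain ⟨p, hpa, hpb⟩ := ((hadj a.1 b.1).mp hGab).2
      obtain ⟨hb1, hb2⟩ := b.2
      rcases hside hb1 hb2 with h | h
      · exact h
      · exfalso
        have h1 := mem_ball.mp (hPa hpa)
        have h2 := h hpb
        exact absurd h1 (not_lt.mpr (le_of_lt h2))
    have hwalk : ∀ a b : V, (G.induce V).Reachable a b →
        sphere (c a.1) (ρ a.1) ⊆ ball (c y) (ρ y) →
        sphere (c b.1) (ρ b.1) ⊆ ball (c y) (ρ y) := by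
      intro a b h
      obtain ⟨w⟩ := h
      induction w with
      | nil => exact fun h => h
      | cons h' p ih => exact fun ha => ih (step _ _ h' ha)
    have hzV : z ∈ V := ⟨hzy, hayz⟩
    have hxV : x ∈ V := ⟨hxy, hayx⟩
    have hPx : sphere (c x) (ρ x) ⊆ ball (c y) (ρ y) :=
      hwalk ⟨z, hzV⟩ ⟨x, hxV⟩ ((hconn y).preconnected _ _) hPz
    have := sphere_subset_ball_nested' (hρ x).le hPx
    linarith
  -- triangle-freeness: neighbours of a common vertex are non-adjacent
  have hnb : ∀ {v x y : ι}, G.Adj v x → G.Adj v y → x ≠ y → ¬ G.Adj x y := by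
    intro v x y hvx hvy hxy hxyadj
    exact htf {v, x, y} (SimpleGraph.is3Clique_triple_iff.mpr ⟨hvx, hvy, hxyadj⟩)
  -- choose vertex of minimal radius
  obtain ⟨v, -, hv⟩ := Finset.exists_min_image Finset.univ ρ Finset.univ_nonempty
  have hvmin : ∀ i, ρ v ≤ ρ i := fun i => hv i (Finset.mem_univ i)
  set r := ρ v with hrdef
  have hr0 : 0 < r := hρ v
  set A := G.neighborFinset v with hA
  have hAmem : ∀ {x}, x ∈ A → G.Adj v x := fun hx =>
    (SimpleGraph.mem_neighborFinset _ _ _).mp hx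
  -- all but at most one neighbour have pairwise disjoint balls
  have hpair : ∃ u : ι, ∀ x ∈ A, ∀ y ∈ A, x ≠ y → x ≠ u → y ≠ u →
      ρ x + ρ y < dist (c x) (c y) := by
    by_cases hex : ∃ z ∈ A, ∃ u ∈ A, z ≠ u ∧ dist (c z) (c u) < ρ u - ρ z
    · obtain ⟨z, hzA, u, huA, hzu, hnzu⟩ := hex
      refine ⟨u, fun x hxA y hyA hxy hxu hyu => ?_⟩
      have hnx : dist (c x) (c u) < ρ u - ρ x :=
        hNL u z x hzu (hnb (hAmem huA) (hAmem hzA) hzu.symm) hnzu hxu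
          (hnb (hAmem huA) (hAmem hxA) hxu.symm)
      have hny : dist (c y) (c u) < ρ u - ρ y :=
        hNL u z y hzu (hnb (hAmem huA) (hAmem hzA) hzu.symm) hnzu hyu
          (hnb (hAmem huA) (hAmem hyA) hyu.symm)
      rcases htri hxy (hnb (hAmem hxA) (hAmem hyA) hxy) with h | h | h
      · exact h
      · -- ball of y nested inside ball of x; then ball of u would nest inside ball of x
        exfalso
        have hyx : dist (c y) (c x) < ρ x - ρ y := by rwa [dist_comm] at h
        have := hNL x y u hxy.symm (hnb (hAmem hxA) (hAmem hyA) hxy) hyx hxu.symm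
          (hnb (hAmem hxA) (hAmem huA) hxu)
        rw [dist_comm (c u) (c x)] at this
        linarith [dist_nonneg (x := c x) (y := c u)]
      · exfalso
        have := hNL y x u hxy (hnb (hAmem hyA) (hAmem hxA) hxy.symm) h hyu.symm
          (hnb (hAmem hyA) (hAmem huA) hyu)
        rw [dist_comm (c u) (c y)] at this
        linarith [dist_nonneg (x := c y) (y := c u)]
    · push_neg at hex
      refine ⟨v, fun x hxA y hyA hxy _ _ => ?_⟩
      rcases htri hxy (hnb (hAmem hxA) (hAmem hyA) hxy) with h | h | h
      · exact h
      · exfalso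
        have := hex y hyA x hxA hxy.symm
        rw [dist_comm] at h
        linarith
      · exfalso
        have := hex x hxA y hyA hxy
        linarith
  obtain ⟨u₂, hfar⟩ := hpair
  set T := A.erase u₂ with hT
  have hTcard : A.card ≤ T.card + 1 := by
    by_cases h : u₂ ∈ A
    · rw [hT, Finset.card_erase_of_mem h]; omega
    · rw [hT, Finset.erase_eq_of_notMem h]; omega
  have hcardA : 3 ^ d + 2 ≤ A.card := hdeg v
  have hTfar : ∀ x ∈ T, ∀ y ∈ T, x ≠ y → ρ x + ρ y < dist (c x) (c y) := by
    intro x hx y hy hxy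
    exact hfar x (Finset.mem_of_mem_erase hx) y (Finset.mem_of_mem_erase hy) hxy
      (Finset.ne_of_mem_erase hx) (Finset.ne_of_mem_erase hy)
  -- choose intersection points with the minimal sphere
  have hpt : ∀ x : ι, ∃ pp : EuclideanSpace ℝ (Fin d),
      x ∈ T → pp ∈ sphere (c v) r ∧ pp ∈ sphere (c x) (ρ x) := by
    intro x
    by_cases hx : x ∈ T
    · have hadjvx := hAmem (Finset.mem_of_mem_erase hx)
      obtain ⟨pp, hp1, hp2⟩ := ((hadj v x).mp hadjvx).2
      exact ⟨pp, fun _ => ⟨hp1, hp2⟩⟩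
    · exact ⟨c v, fun h => (hx h).elim⟩
  choose p hp using hpt
  set q : ι → EuclideanSpace ℝ (Fin d) :=
    fun x => c x + ((ρ x - r) / ρ x) • (p x - c x) with hq
  have hq1 : ∀ x ∈ T, dist (q x) (c x) = ρ x - r := by
    intro x hx
    have hpx : dist (p x) (c x) = ρ x := mem_sphere.mp (hp x hx).2
    have hrx : r ≤ ρ x := hvmin x
    rw [hq]
    rw [dist_eq_norm]
    simp only [add_sub_cancel_left]
    rw [norm_smul, Real.norm_eq_abs,
      abs_of_nonneg (div_nonneg (by linarith) (hρ x).le), ← dist_eq_norm, hpx,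
      div_mul_eq_mul_div, mul_div_cancel_right₀ _ (hρ x).ne']
  have hq2 : ∀ x ∈ T, dist (q x) (p x) = r := by
    intro x hx
    have hpx : dist (p x) (c x) = ρ x := mem_sphere.mp (hp x hx).2
    have hkey : q x - p x = (((ρ x - r) / ρ x) - 1) • (p x - c x) := by
      rw [hq]; beta_reduce; rw [sub_smul, one_smul]; abel
    rw [dist_eq_norm, hkey, norm_smul, Real.norm_eq_abs, ← dist_eq_norm, hpx]
    have heq : (ρ x - r) / ρ x - 1 = -(r / ρ x) := by
      rw [sub_div, div_self (hρ x).ne']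
      ring
    rw [heq, abs_neg, abs_of_nonneg (div_nonneg hr0.le (hρ x).le),
      div_mul_eq_mul_div, mul_div_cancel_right₀ _ (hρ x).ne']
  have hq3 : ∀ x ∈ T, dist (q x) (c v) ≤ 2 * r := by
    intro x hx
    have hp1x : dist (p x) (c v) = r := mem_sphere.mp (hp x hx).1
    calc dist (q x) (c v) ≤ dist (q x) (p x) + dist (p x) (c v) := dist_triangle _ _ _
    _ = 2 * r := by rw [hq2 x hx, hp1x]; ring
  have hsubT : ∀ x ∈ T, closedBall (q x) r ⊆ closedBall (c v) (3 * r) := by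
    intro x hx z hz
    rw [mem_closedBall] at hz ⊢
    calc dist z (c v) ≤ dist z (q x) + dist (q x) (c v) := dist_triangle _ _ _
    _ ≤ r + 2 * r := add_le_add hz (hq3 x hx)
    _ = 3 * r := by ring
  have hpd : (↑T : Set ι).PairwiseDisjoint (fun x => closedBall (q x) r) := by
    intro x hx y hy hxy
    simp only [Function.onFun]
    rw [Set.disjoint_left]
    intro z hzx hzy
    rw [mem_closedBall] at hzx hzy
    have hfarxy := hTfar x hx y hy hxy
    have hxball : r ≤ ρ x := hvmin x
    have hyball : r ≤ ρ y := hvmin y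
    have h1 : dist (c x) (c y) ≤ (ρ x - r) + r + (r + (ρ y - r)) := by
      calc dist (c x) (c y) ≤ dist (c x) (q x) + dist (q x) (c y) := dist_triangle _ _ _
      _ ≤ dist (c x) (q x) + (dist (q x) z + dist z (c y)) :=
          add_le_add (le_refl _) (dist_triangle _ _ _)
      _ ≤ dist (c x) (q x) + (dist (q x) z + (dist z (q y) + dist (q y) (c y))) := by
          gcongr
          exact dist_triangle _ _ _
      _ ≤ (ρ x - r) + (r + (r + (ρ y - r))) := by
          have e1 : dist (c x) (q x) = ρ x - r := by rw [dist_comm]; exact hq1 x hx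
          have e2 : dist (q y) (c y) = ρ y - r := hq1 y hy
          rw [e1, e2]
          gcongr
          rwa [dist_comm] at hzx
      _ = (ρ x - r) + r + (r + (ρ y - r)) := by ring
    linarith
  -- packing bound via volumes
  have hmB := MeasureTheory.measure_biUnion_finset (μ := MeasureTheory.volume) hpd
    (fun i _ => measurableSet_closedBall)
  have hmono : MeasureTheory.volume (⋃ x ∈ T, closedBall (q x) r) ≤
      MeasureTheory.volume (closedBall (c v) (3 * r)) :=
    MeasureTheory.measure_mono (Set.iUnion₂_subset hsubT)
  set B := MeasureTheory.volume (ball (0 : EuclideanSpace ℝ (Fin d)) 1) with hB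
  have hvol : ∀ (qc : EuclideanSpace ℝ (Fin d)) (s : ℝ), 0 ≤ s →
      MeasureTheory.volume (closedBall qc s) = ENNReal.ofReal (s ^ d) * B := by
    intro qc s hs
    rw [MeasureTheory.Measure.addHaar_closedBall _ _ hs, hfr]
  have hkey : (T.card : ENNReal) * (ENNReal.ofReal (r ^ d) * B) ≤
      ENNReal.ofReal (3 ^ d * r ^ d) * B := by
    calc (T.card : ENNReal) * (ENNReal.ofReal (r ^ d) * B)
        = ∑ x ∈ T, MeasureTheory.volume (closedBall (q x) r) := by
          rw [Finset.sum_congr rfl (fun x _ => hvol (q x) r hr0.le), Finset.sum_const,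
            nsmul_eq_mul]
    _ = MeasureTheory.volume (⋃ x ∈ T, closedBall (q x) r) := hmB.symm
    _ ≤ MeasureTheory.volume (closedBall (c v) (3 * r)) := hmono
    _ = ENNReal.ofReal (3 ^ d * r ^ d) * B := by
          rw [hvol (c v) (3 * r) (by positivity), mul_pow]
  have hX0 : ENNReal.ofReal (r ^ d) * B ≠ 0 := by
    apply mul_ne_zero
    · simp [ENNReal.ofReal_eq_zero]
      positivity
    · exact (measure_ball_pos _ _ one_pos).ne'
  have hXtop : ENNReal.ofReal (r ^ d) * B ≠ ⊤ := by
    apply ENNReal.mul_ne_top ENNReal.ofReal_ne_top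
    exact MeasureTheory.measure_ball_lt_top.ne
  have hkey2 : (T.card : ENNReal) ≤ ENNReal.ofReal ((3 : ℝ) ^ d) := by
    rw [← ENNReal.mul_le_mul_iff_left hX0 hXtop]
    calc (T.card : ENNReal) * (ENNReal.ofReal (r ^ d) * B)
        ≤ ENNReal.ofReal (3 ^ d * r ^ d) * B := hkey
    _ = ENNReal.ofReal ((3 : ℝ) ^ d) * (ENNReal.ofReal (r ^ d) * B) := by
          rw [ENNReal.ofReal_mul (by positivity), mul_assoc]
  have hnat : ((3 : ℝ)) ^ d = ((3 ^ d : ℕ) : ℝ) := by push_cast; ring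
  rw [hnat, ENNReal.ofReal_natCast] at hkey2
  have hfinal : T.card ≤ 3 ^ d := Nat.cast_le.mp hkey2
  omega
end
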